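/- For all positive integers n and r with r ≥ 2, in any r-colouring of the edges of K_n there is a monochromatic connected subgraph on at least n/(r-1) vertices; that is, m(n,r,1,1) ≥ n/(r-1). -/

import Mathlib

open Finset

def colorGraph (n r : ℕ) (f : Sym2 (Fin n) → Fin r) (i : Fin r) :
    SimpleGraph (Fin n) where
  Adj a b := a ≠ b ∧ f s(a, b) = i
  symm := ⟨fun a b h => ⟨h.1.symm, by rw [Sym2.eq_swap]; exact h.2⟩⟩
  loopless := ⟨fun a h => h.1 rfl⟩

section Aux
open scoped Classical

variable {V : Type*} [Fintype V] [DecidableEq V]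

/-- The monochromatic component (set of vertices reachable from `u`) as a finset. -/
noncomputable def mcompF (G : SimpleGraph V) (u : V) : Finset V :=
  @Finset.filter V (fun x => G.Reachable u x) (Classical.decPred _) Finset.univ

lemma mem_mcompF {G : SimpleGraph V} {u x : V} : x ∈ mcompF G u ↔ G.Reachable u x := by
  simp [mcompF]

lemma self_mem_mcompF (G : SimpleGraph V) (u : V) : u ∈ mcompF G u :=
  mem_mcompF.2 (SimpleGraph.Reachable.refl u)

lemma mcompF_eq_iff {G : SimpleGraph V} {u x : V} :
    mcompF G x = mcompF G u ↔ x ∈ mcompF G u := by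
  constructor
  · intro h
    rw [← h]; exact self_mem_mcompF G x
  · intro h
    have hux : G.Reachable u x := mem_mcompF.1 h
    ext y
    simp only [mem_mcompF]
    exact ⟨fun hy => hux.trans hy, fun hy => hux.symm.trans hy⟩

lemma mcompF_induce_connected (G : SimpleGraph V) (u : V) :
    (G.induce (↑(mcompF G u) : Set V)).Connected := by
  have hmem : ∀ x : V, x ∈ (↑(mcompF G u) : Set V) ↔ G.Reachable u x := by
    intro x; simp [mem_mcompF]
  have key : ∀ {x y : V} (_ : G.Walk x y) (hx : G.Reachable u x) (hy : G.Reachable u y),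
      (G.induce (↑(mcompF G u) : Set V)).Reachable ⟨x, (hmem x).2 hx⟩ ⟨y, (hmem y).2 hy⟩ := by
    intro x y p
    induction p with
    | nil => intro hx hy; exact SimpleGraph.Reachable.refl _
    | @cons a b c h q ih =>
      intro hx hy
      have hb : G.Reachable u b := hx.trans h.reachable
      have hadj : (G.induce (↑(mcompF G u) : Set V)).Adj ⟨a, (hmem a).2 hx⟩ ⟨b, (hmem b).2 hb⟩ := by
        simpa using h
      exact hadj.reachable.trans (ih hb hy)
  rw [SimpleGraph.connected_iff]
  refine ⟨?_, ⟨⟨u, (hmem u).2 (SimpleGraph.Reachable.refl u)⟩⟩⟩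
  rintro ⟨x, hx⟩ ⟨y, hy⟩
  have hx' : G.Reachable u x := (hmem x).1 hx
  have hy' : G.Reachable u y := (hmem y).1 hy
  exact (hx'.symm.trans hy').elim fun p => key p hx' hy'

lemma sum_fiber_card (G : SimpleGraph V) (s : Finset V) :
    ∑ C ∈ Finset.univ.image (mcompF G), (s.filter (fun x => mcompF G x = C)).card = s.card :=
  (Finset.card_eq_sum_card_fiberwise (fun x _ => Finset.mem_image_of_mem _ (mem_univ x))).symm

lemma card_reach_pairs (G : SimpleGraph V) (s t : Finset V) :
    ((s ×ˢ t).filter (fun p : V × V => G.Reachable p.1 p.2)).card =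
    ∑ C ∈ Finset.univ.image (mcompF G),
      (s.filter (fun x => mcompF G x = C)).card * (t.filter (fun x => mcompF G x = C)).card := by
  classical
  rw [Finset.card_eq_sum_card_fiberwise
    (f := fun p : V × V => mcompF G p.1) (t := Finset.univ.image (mcompF G))
    (fun (p : V × V) _ => Finset.mem_image_of_mem _ (mem_univ p.1))]
  refine Finset.sum_congr rfl ?_
  intro C _
  have hset : ((s ×ˢ t).filter (fun p : V × V => G.Reachable p.1 p.2)).filter
      (fun p => mcompF G p.1 = C)
      = (s.filter (fun x => mcompF G x = C)) ×ˢ (t.filter (fun x => mcompF G x = C)) := by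
    ext ⟨x, y⟩
    simp only [Finset.mem_filter, Finset.mem_product]
    constructor
    · rintro ⟨⟨⟨hxs, hyt⟩, hr⟩, hcx⟩
      refine ⟨⟨hxs, hcx⟩, hyt, ?_⟩
      have : mcompF G y = mcompF G x := mcompF_eq_iff.2 (mem_mcompF.2 hr)
      rw [this, hcx]
    · rintro ⟨⟨hxs, hcx⟩, hyt, hcy⟩
      have h1 : mcompF G y = mcompF G x := hcy.trans hcx.symm
      have h2 : y ∈ mcompF G x := mcompF_eq_iff.1 h1
      exact ⟨⟨⟨hxs, hyt⟩, mem_mcompF.1 h2⟩, hcx⟩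
  rw [hset, Finset.card_product]

lemma filter_card_le (G : SimpleGraph V) (s : Finset V) (C : Finset V) :
    (s.filter (fun x => mcompF G x = C)).card + ((sᶜ).filter (fun x => mcompF G x = C)).card
      ≤ C.card := by
  classical
  have hdisj : Disjoint (s.filter (fun x => mcompF G x = C))
      ((sᶜ).filter (fun x => mcompF G x = C)) :=
    Finset.disjoint_filter_filter disjoint_compl_right
  rw [← Finset.card_union_of_disjoint hdisj]
  apply Finset.card_le_card
  intro x hx
  rcases Finset.mem_union.1 hx with hx' | hx' <;>
  · have h := (Finset.mem_filter.1 hx').2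
    rw [← h]
    exact self_mem_mcompF G x

lemma milne_two (x y u v : ℝ) (hx : 0 ≤ x) (hy : 0 ≤ y) (hu : 0 ≤ u) (hv : 0 ≤ v) :
    x * y / (x + y) + u * v / (u + v) ≤ (x + u) * (y + v) / ((x + u) + (y + v)) := by
  rcases eq_or_lt_of_le (by linarith : (0:ℝ) ≤ x + y) with h1 | h1
  · have hx0 : x = 0 := by linarith
    have hy0 : y = 0 := by linarith
    simp [hx0, hy0]
  rcases eq_or_lt_of_le (by linarith : (0:ℝ) ≤ u + v) with h2 | h2
  · have hu0 : u = 0 := by linarith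
    have hv0 : v = 0 := by linarith
    simp [hu0, hv0]
  have h3 : (0:ℝ) < (x + u) + (y + v) := by linarith
  rw [div_add_div _ _ (ne_of_gt h1) (ne_of_gt h2), div_le_div_iff₀ (by positivity) h3]
  nlinarith [sq_nonneg (x * v - y * u), mul_nonneg hx hv, mul_nonneg hy hu]

lemma milne_sum {ι : Type*} (s : Finset ι) (a b : ι → ℝ) (ha : ∀ i ∈ s, 0 ≤ a i)
    (hb : ∀ i ∈ s, 0 ≤ b i) :
    ∑ i ∈ s, a i * b i / (a i + b i)
      ≤ (∑ i ∈ s, a i) * (∑ i ∈ s, b i) / ((∑ i ∈ s, a i) + (∑ i ∈ s, b i)) := by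
  classical
  induction s using Finset.induction_on with
  | empty => simp
  | @insert i s his ih =>
    have ha' : ∀ j ∈ s, 0 ≤ a j := fun j hj => ha j (Finset.mem_insert_of_mem hj)
    have hb' : ∀ j ∈ s, 0 ≤ b j := fun j hj => hb j (Finset.mem_insert_of_mem hj)
    rw [Finset.sum_insert his, Finset.sum_insert his, Finset.sum_insert his]
    calc a i * b i / (a i + b i) + ∑ j ∈ s, a j * b j / (a j + b j)
        ≤ a i * b i / (a i + b i)
          + (∑ j ∈ s, a j) * (∑ j ∈ s, b j) / ((∑ j ∈ s, a j) + (∑ j ∈ s, b j)) := by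
          exact (add_le_add_iff_left _).2 (ih ha' hb')
      _ ≤ (a i + ∑ j ∈ s, a j) * (b i + ∑ j ∈ s, b j)
            / ((a i + ∑ j ∈ s, a j) + (b i + ∑ j ∈ s, b j)) :=
          milne_two _ _ _ _ (ha i (Finset.mem_insert_self i s))
            (hb i (Finset.mem_insert_self i s))
            (Finset.sum_nonneg ha') (Finset.sum_nonneg hb')

lemma ab_le_M_h (a b M : ℝ) (ha : 0 ≤ a) (hb : 0 ≤ b) (hM : a + b ≤ M) :
    a * b ≤ M * (a * b / (a + b)) := by
  rcases eq_or_lt_of_le (by linarith : (0:ℝ) ≤ a + b) with h | h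
  · have ha0 : a = 0 := by linarith
    simp [ha0]
  · rw [show M * (a * b / (a + b)) = M * (a * b) / (a + b) from by ring, le_div_iff₀ h]
    nlinarith [mul_nonneg ha hb]

end Aux

theorem stmt7 (n r : ℕ) (hn : 1 ≤ n) (hr : 2 ≤ r)
    (f : Sym2 (Fin n) → Fin r) :
    ∃ (i : Fin r) (A : Set (Fin n)),
      ((colorGraph n r f i).induce A).Connected ∧
      (n : ℝ) / ((r : ℝ) - 1) ≤ (A.ncard : ℝ) := by
  classical
  have hrpos : 0 < r := by omega
  have h2r : (2:ℝ) ≤ (r:ℝ) := by exact_mod_cast hr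
  set c₀ : Fin r := ⟨0, hrpos⟩ with hc₀def
  have huniv_ne : (Finset.univ : Finset (Fin r × Fin n)).Nonempty :=
    ⟨(c₀, ⟨0, hn⟩), mem_univ _⟩
  set Fc : Fin r × Fin n → ℕ := fun p => (mcompF (colorGraph n r f p.1) p.2).card with hFc
  set M : ℕ := Finset.univ.sup' huniv_ne Fc with hMdef
  have key : (n : ℝ) ≤ ((r:ℝ) - 1) * M := by
    by_cases hcon : (colorGraph n r f c₀).Preconnected
    · -- the colour c₀ graph is connected; its component is everything
      have h1 : mcompF (colorGraph n r f c₀) ⟨0, hn⟩ = Finset.univ := by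
        ext x
        simp only [mem_mcompF, Finset.mem_univ, iff_true]
        exact hcon _ x
      have h2 : n ≤ M := by
        have h3 := Finset.le_sup' Fc (Finset.mem_univ (c₀, (⟨0, hn⟩ : Fin n)))
        simp only [hFc] at h3
        rw [h1, Finset.card_univ, Fintype.card_fin] at h3
        exact h3
      have h4 : (n:ℝ) ≤ (M:ℝ) := by exact_mod_cast h2
      nlinarith [Nat.cast_nonneg (α := ℝ) M]
    · rw [SimpleGraph.Preconnected] at hcon
      push_neg at hcon
      obtain ⟨v, w, hvw⟩ := hcon
      set D : Finset (Fin n) := mcompF (colorGraph n r f c₀) v with hDdef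
      have hvD : v ∈ D := self_mem_mcompF _ _
      have hwD : w ∈ Dᶜ := by
        rw [Finset.mem_compl, hDdef, mem_mcompF]
        exact hvw
      have hm1 : 0 < D.card := Finset.card_pos.2 ⟨v, hvD⟩
      have hm2 : 0 < (Dᶜ).card := Finset.card_pos.2 ⟨w, hwD⟩
      have hsum : D.card + (Dᶜ).card = n := by
        rw [Finset.card_add_card_compl, Fintype.card_fin]
      have hsumR : ((D.card : ℝ) + ((Dᶜ).card : ℝ)) = (n:ℝ) := by exact_mod_cast hsum
      -- the colour of a cross pair is never c₀
      have hc0 : ((D ×ˢ Dᶜ).filter (fun p => f s(p.1, p.2) = c₀)).card = 0 := by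
        rw [Finset.card_eq_zero, Finset.filter_eq_empty_iff]
        rintro ⟨x, y⟩ hxy hfc
        rw [Finset.mem_product] at hxy
        have hx : (colorGraph n r f c₀).Reachable v x := mem_mcompF.1 hxy.1
        have hne : x ≠ y := by
          rintro rfl
          exact (Finset.mem_compl.1 hxy.2) hxy.1
        have hadj : (colorGraph n r f c₀).Adj x y := ⟨hne, hfc⟩
        exact (Finset.mem_compl.1 hxy.2) (mem_mcompF.2 (hx.trans hadj.reachable))
      -- per-colour bound
      have hcol : ∀ c : Fin r,
          ((((D ×ˢ Dᶜ).filter (fun p => f s(p.1, p.2) = c)).card : ℝ))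
            ≤ (M:ℝ) * ((D.card : ℝ) * ((Dᶜ).card : ℝ) / (n:ℝ)) := by
        intro c
        have hsub : ((D ×ˢ Dᶜ).filter (fun p => f s(p.1, p.2) = c))
            ⊆ ((D ×ˢ Dᶜ).filter (fun p : Fin n × Fin n => (colorGraph n r f c).Reachable p.1 p.2)) := by
          intro q hq
          rw [Finset.mem_filter] at hq ⊢
          refine ⟨hq.1, ?_⟩
          have hq1 := Finset.mem_product.1 hq.1
          have hne : q.1 ≠ q.2 := by
            intro h
            exact (Finset.mem_compl.1 hq1.2) (h ▸ hq1.1)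
          exact (SimpleGraph.Adj.reachable (⟨hne, hq.2⟩ : (colorGraph n r f c).Adj q.1 q.2))
        have h1 : ((D ×ˢ Dᶜ).filter (fun p => f s(p.1, p.2) = c)).card
            ≤ ∑ C ∈ Finset.univ.image (mcompF (colorGraph n r f c)),
                (D.filter (fun x => mcompF (colorGraph n r f c) x = C)).card
                  * ((Dᶜ).filter (fun x => mcompF (colorGraph n r f c) x = C)).card := by
          rw [← card_reach_pairs]
          exact Finset.card_le_card hsub
        have hcompM : ∀ C ∈ Finset.univ.image (mcompF (colorGraph n r f c)),
            ((D.filter (fun x => mcompF (colorGraph n r f c) x = C)).card : ℝ)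
              + (((Dᶜ).filter (fun x => mcompF (colorGraph n r f c) x = C)).card : ℝ)
              ≤ (M:ℝ) := by
          intro C hC
          obtain ⟨u, -, rfl⟩ := Finset.mem_image.1 hC
          have h5 := filter_card_le (colorGraph n r f c) D (mcompF (colorGraph n r f c) u)
          have h6 : (mcompF (colorGraph n r f c) u).card ≤ M :=
            Finset.le_sup' Fc (Finset.mem_univ (c, u))
          exact_mod_cast le_trans h5 h6
        have hsa : ∑ C ∈ Finset.univ.image (mcompF (colorGraph n r f c)),
            ((D.filter (fun x => mcompF (colorGraph n r f c) x = C)).card : ℝ) = (D.card : ℝ) := by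
          rw [← Nat.cast_sum, sum_fiber_card]
        have hsb : ∑ C ∈ Finset.univ.image (mcompF (colorGraph n r f c)),
            (((Dᶜ).filter (fun x => mcompF (colorGraph n r f c) x = C)).card : ℝ)
              = ((Dᶜ).card : ℝ) := by
          rw [← Nat.cast_sum, sum_fiber_card]
        calc ((((D ×ˢ Dᶜ).filter (fun p => f s(p.1, p.2) = c)).card : ℝ))
            ≤ ((∑ C ∈ Finset.univ.image (mcompF (colorGraph n r f c)),
                (D.filter (fun x => mcompF (colorGraph n r f c) x = C)).card
                  * ((Dᶜ).filter (fun x => mcompF (colorGraph n r f c) x = C)).card : ℕ) : ℝ) := by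
              exact_mod_cast h1
          _ = ∑ C ∈ Finset.univ.image (mcompF (colorGraph n r f c)),
                ((D.filter (fun x => mcompF (colorGraph n r f c) x = C)).card : ℝ)
                  * (((Dᶜ).filter (fun x => mcompF (colorGraph n r f c) x = C)).card : ℝ) := by
              push_cast
              rfl
          _ ≤ ∑ C ∈ Finset.univ.image (mcompF (colorGraph n r f c)),
                (M:ℝ) * (((D.filter (fun x => mcompF (colorGraph n r f c) x = C)).card : ℝ)
                  * (((Dᶜ).filter (fun x => mcompF (colorGraph n r f c) x = C)).card : ℝ)
                  / (((D.filter (fun x => mcompF (colorGraph n r f c) x = C)).card : ℝ)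
                    + (((Dᶜ).filter (fun x => mcompF (colorGraph n r f c) x = C)).card : ℝ))) := by
              apply Finset.sum_le_sum
              intro C hC
              exact ab_le_M_h _ _ _ (Nat.cast_nonneg _) (Nat.cast_nonneg _) (hcompM C hC)
          _ = (M:ℝ) * ∑ C ∈ Finset.univ.image (mcompF (colorGraph n r f c)),
                (((D.filter (fun x => mcompF (colorGraph n r f c) x = C)).card : ℝ)
                  * (((Dᶜ).filter (fun x => mcompF (colorGraph n r f c) x = C)).card : ℝ)
                  / (((D.filter (fun x => mcompF (colorGraph n r f c) x = C)).card : ℝ)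
                    + (((Dᶜ).filter (fun x => mcompF (colorGraph n r f c) x = C)).card : ℝ))) := by
              rw [Finset.mul_sum]
          _ ≤ (M:ℝ) * ((D.card : ℝ) * ((Dᶜ).card : ℝ) / (n:ℝ)) := by
              apply mul_le_mul_of_nonneg_left _ (Nat.cast_nonneg M)
              have hmil := milne_sum (Finset.univ.image (mcompF (colorGraph n r f c)))
                (fun C => ((D.filter (fun x => mcompF (colorGraph n r f c) x = C)).card : ℝ))
                (fun C => (((Dᶜ).filter (fun x => mcompF (colorGraph n r f c) x = C)).card : ℝ))
                (fun C _ => Nat.cast_nonneg _) (fun C _ => Nat.cast_nonneg _)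
              rw [hsa, hsb, hsumR] at hmil
              exact hmil
      -- put colours together
      have htot : ((D.card : ℝ) * ((Dᶜ).card : ℝ))
          ≤ ((r:ℝ) - 1) * ((M:ℝ) * ((D.card : ℝ) * ((Dᶜ).card : ℝ) / (n:ℝ))) := by
        have e0 : (D ×ˢ Dᶜ).card
            = ∑ c ∈ (Finset.univ : Finset (Fin r)),
                ((D ×ˢ Dᶜ).filter (fun p => f s(p.1, p.2) = c)).card :=
          Finset.card_eq_sum_card_fiberwise (fun p _ => Finset.mem_univ _)
        have e1 : D.card * (Dᶜ).card
            = ∑ c ∈ Finset.univ.erase c₀,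
                ((D ×ˢ Dᶜ).filter (fun p => f s(p.1, p.2) = c)).card := by
          rw [← Finset.card_product, e0,
            ← Finset.add_sum_erase _ _ (Finset.mem_univ c₀), hc0, zero_add]
        have e2 : ((D.card : ℝ) * ((Dᶜ).card : ℝ))
            = ∑ c ∈ Finset.univ.erase c₀,
                (((D ×ˢ Dᶜ).filter (fun p => f s(p.1, p.2) = c)).card : ℝ) := by
          rw [← Nat.cast_sum, ← e1]
          push_cast
          ring
        have e3 : ((Finset.univ.erase c₀).card : ℝ) = (r:ℝ) - 1 := by
          rw [Finset.card_erase_of_mem (Finset.mem_univ c₀), Finset.card_univ, Fintype.card_fin]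
          have : (1:ℕ) ≤ r := by omega
          push_cast [Nat.cast_sub this]
          ring
        calc ((D.card : ℝ) * ((Dᶜ).card : ℝ))
            = ∑ c ∈ Finset.univ.erase c₀,
              (((D ×ˢ Dᶜ).filter (fun p => f s(p.1, p.2) = c)).card : ℝ) := e2
          _ ≤ ∑ _c ∈ Finset.univ.erase c₀,
                (M:ℝ) * ((D.card : ℝ) * ((Dᶜ).card : ℝ) / (n:ℝ)) :=
              Finset.sum_le_sum (fun c _ => hcol c)
          _ = ((Finset.univ.erase c₀).card : ℝ)
                * ((M:ℝ) * ((D.card : ℝ) * ((Dᶜ).card : ℝ) / (n:ℝ))) := by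
              rw [Finset.sum_const, nsmul_eq_mul]
          _ = ((r:ℝ) - 1) * ((M:ℝ) * ((D.card : ℝ) * ((Dᶜ).card : ℝ) / (n:ℝ))) := by
              rw [e3]
      -- rearrange
      have hn0 : (0:ℝ) < (n:ℝ) := by
        have : 0 < n := hn
        exact_mod_cast this
      have hP : (0:ℝ) < (D.card : ℝ) * ((Dᶜ).card : ℝ) := by
        have h1' : (0:ℝ) < (D.card : ℝ) := by exact_mod_cast hm1
        have h2' : (0:ℝ) < ((Dᶜ).card : ℝ) := by exact_mod_cast hm2
        exact mul_pos h1' h2'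
      have htot2 : (D.card : ℝ) * ((Dᶜ).card : ℝ) * (n:ℝ)
          ≤ ((r:ℝ) - 1) * (M:ℝ) * ((D.card : ℝ) * ((Dᶜ).card : ℝ)) := by
        have e4 : ((r:ℝ) - 1) * ((M:ℝ) * ((D.card : ℝ) * ((Dᶜ).card : ℝ) / (n:ℝ)))
            = ((r:ℝ) - 1) * (M:ℝ) * ((D.card : ℝ) * ((Dᶜ).card : ℝ)) / (n:ℝ) := by
          ring
        rw [e4] at htot
        exact (le_div_iff₀ hn0).1 htot
      by_contra hcontra
      push_neg at hcontra
      nlinarith [htot2, hP]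
  -- extract the maximiser
  obtain ⟨p, -, hp⟩ := Finset.exists_mem_eq_sup' huniv_ne Fc
  refine ⟨p.1, (↑(mcompF (colorGraph n r f p.1) p.2) : Set (Fin n)),
    mcompF_induce_connected _ _, ?_⟩
  rw [Set.ncard_coe_finset]
  have hMnat : M = (mcompF (colorGraph n r f p.1) p.2).card := hp
  have hMcard : (M:ℝ) = ((mcompF (colorGraph n r f p.1) p.2).card : ℝ) := by
    exact_mod_cast hMnat
  rw [div_le_iff₀ (by linarith : (0:ℝ) < (r:ℝ) - 1)]
  calc (n:ℝ) ≤ ((r:ℝ) - 1) * M := key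
    _ = ((mcompF (colorGraph n r f p.1) p.2).card : ℝ) * ((r:ℝ) - 1) := by
        rw [hMcard]; ring
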